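/- Let m ≥ 1 and let T ∈ M_m be the bidiagonal matrix with T_{ii} = 1 for 1 ≤ i ≤ m, T_{i,i+1} = 1 for 1 ≤ i ≤ m−1, and all other entries 0. Then the operator norm of T equals 2 cos(π/(2m+1)). -/

import Mathlib

open Matrix

noncomputable section

namespace BidiagAux

open Finset

def th (m : ℕ) : ℝ := Real.pi / (2 * m + 1)
def c (m : ℕ) : ℝ := 2 * Real.cos (th m)
def v (m : ℕ) (k : ℕ) : ℝ := Real.sin ((2 * k - 1) * th m)

lemma th_pos (m : ℕ) : 0 < th m := by
  apply div_pos Real.pi_pos; positivity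

lemma c_pos (m : ℕ) (hm : 1 ≤ m) : 0 < c m := by
  have h1 : th m < Real.pi / 2 := by
    unfold th
    apply div_lt_div_of_pos_left Real.pi_pos (by norm_num)
    have : (1:ℝ) ≤ (m:ℝ) := by exact_mod_cast hm
    linarith
  have := Real.cos_pos_of_mem_Ioo (x := th m) ⟨by linarith [th_pos m, Real.pi_pos], h1⟩
  unfold c; linarith

lemma v_pos (m : ℕ) (k : ℕ) (h1 : 1 ≤ k) (h2 : k ≤ m) : 0 < v m k := by
  unfold v
  apply Real.sin_pos_of_pos_of_lt_pi
  · have : (1:ℝ) ≤ (k:ℝ) := by exact_mod_cast h1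
    have := th_pos m
    nlinarith
  · have hk : (k:ℝ) ≤ (m:ℝ) := by exact_mod_cast h2
    have h3 : (2*(k:ℝ)-1) < 2*m+1 := by linarith
    have h4 : (2*(k:ℝ)-1) * th m < (2*m+1) * th m :=
      mul_lt_mul_of_pos_right h3 (th_pos m)
    have h5 : (2*(m:ℝ)+1) * th m = Real.pi := by
      unfold th; field_simp
    linarith

lemma v_zero (m : ℕ) : v m 0 = - v m 1 := by
  unfold v
  push_cast
  rw [show (2*(0:ℝ)-1) * th m = -((2*1-1) * th m) by ring, Real.sin_neg]

lemma v_top (m : ℕ) : v m (m+1) = 0 := by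
  unfold v
  push_cast
  rw [show (2*((m:ℝ)+1)-1) * th m = (2*m+1) * (Real.pi / (2*m+1)) by unfold th; ring]
  rw [mul_div_cancel₀ _ (by positivity)]
  exact Real.sin_pi

lemma vrec (m : ℕ) (k : ℕ) : v m k + v m (k+2) + 2 * v m (k+1) = c m ^ 2 * v m (k+1) := by
  unfold v c
  push_cast
  rw [show (2*(k:ℝ)-1) * th m = (2*(k:ℝ)+1)*th m - 2*th m by ring,
      show (2*((k:ℝ)+2)-1) * th m = (2*(k:ℝ)+1)*th m + 2*th m by ring,
      show (2*((k:ℝ)+1)-1) * th m = (2*(k:ℝ)+1)*th m by ring,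
      Real.sin_sub, Real.sin_add, Real.cos_two_mul]
  ring

lemma vsum (m : ℕ) (k : ℕ) : v m k + v m (k+1) = c m * Real.sin (2*(k:ℝ) * th m) := by
  unfold v c
  push_cast
  rw [show (2*(k:ℝ)-1) * th m = 2*(k:ℝ)*th m - th m by ring,
      show (2*((k:ℝ)+1)-1) * th m = 2*(k:ℝ)*th m + th m by ring,
      Real.sin_sub, Real.sin_add]
  ring

lemma keyQ (m : ℕ) (a : ℕ → ℝ) (ha : ∀ i, 0 ≤ a i) :
    ∀ n, n + 1 ≤ m →
    v m (n+1) * ∑ i ∈ range n, (a i + a (i+1))^2 ≤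
      v m (n+1) * (c m ^2 * ∑ i ∈ range n, (a i)^2) + (v m (n+1) + v m n) * (a n)^2 := by
  intro n
  induction n with
  | zero =>
      intro _
      simp [v_zero m]
  | succ n ih =>
      intro h
      have IH := ih (by omega)
      have hq : 0 < v m (n+1) := v_pos m (n+1) (by omega) (by omega)
      have hr : 0 < v m (n+2) := v_pos m (n+2) (by omega) (by omega)
      have hp : v m n = c m ^2 * v m (n+1) - 2 * v m (n+1) - v m (n+2) := by
        linarith [vrec m n]
      rw [hp] at IH
      rw [sum_range_succ, sum_range_succ]
      nlinarith [mul_le_mul_of_nonneg_left IH hr.le,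
        sq_nonneg (v m (n+1) * a (n+1) - v m (n+2) * a n), hq, hr, mul_pos hq hr,
        ha n, ha (n+1)]

lemma key2 (m : ℕ) (hm : 1 ≤ m) (a : ℕ → ℝ) (ha : ∀ i, 0 ≤ a i) (ham : a m = 0) :
    ∑ i ∈ range m, (a i + a (i+1))^2 ≤ c m ^2 * ∑ i ∈ range m, (a i)^2 := by
  obtain ⟨n, rfl⟩ : ∃ n, m = n + 1 := ⟨m-1, by omega⟩
  have hQ := keyQ (n+1) a ha n (le_refl _)
  have hq : 0 < v (n+1) (n+1) := v_pos (n+1) (n+1) (by omega) (by omega)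
  have hrecn := vrec (n+1) n
  rw [v_top (n+1)] at hrecn
  rw [sum_range_succ, sum_range_succ, ham]
  nlinarith [hQ, hq, sq_nonneg (a n)]

lemma mulVec_formula (m : ℕ) (T : Matrix (Fin m) (Fin m) ℂ)
    (hT : ∀ i j : Fin m, T i j =
      if i = j then 1 else if (i : ℕ) + 1 = (j : ℕ) then 1 else 0)
    (x : Fin m → ℂ) (i : Fin m) :
    T.mulVec x i = x i + (if h : (i:ℕ)+1 < m then x ⟨(i:ℕ)+1, h⟩ else 0) := by
  simp only [Matrix.mulVec, dotProduct]
  have step : ∀ j : Fin m, T i j * x j =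
      (if i = j then x j else 0) + (if (i:ℕ)+1 = (j:ℕ) then x j else 0) := by
    intro j
    rw [hT]
    by_cases h1 : i = j
    · subst h1
      simp
    · rcases em ((i:ℕ)+1 = (j:ℕ)) with h2 | h2 <;> simp [h1, h2]
  rw [Finset.sum_congr rfl (fun j _ => step j), Finset.sum_add_distrib]
  congr 1
  · simp
  · by_cases h : (i:ℕ)+1 < m
    · rw [dif_pos h]
      rw [Finset.sum_eq_single (⟨(i:ℕ)+1, h⟩ : Fin m)]
      · simp
      · intro j _ hj
        have : (i:ℕ)+1 ≠ (j:ℕ) := fun hc => hj (by ext; simp [← hc])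
        simp [this]
      · simp
    · rw [dif_neg h]
      apply Finset.sum_eq_zero
      intro j _
      have : (i:ℕ)+1 ≠ (j:ℕ) := by have := j.isLt; omega
      simp [this]

lemma reflect (m : ℕ) :
    ∑ k ∈ range m, (Real.sin (2*((k:ℝ)+1) * th m))^2 = ∑ k ∈ range m, (v m (k+1))^2 := by
  rw [← Finset.sum_range_reflect (fun k => (v m (k+1))^2) m]
  apply Finset.sum_congr rfl
  intro k hk
  have hk' : k < m := mem_range.mp hk
  have e1 : (m - 1 - k) + k + 1 = m := by omega
  have e2 : ((m - 1 - k : ℕ) : ℝ) = (m:ℝ) - (k:ℝ) - 1 := by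
    have := congrArg (fun n : ℕ => (n : ℝ)) e1
    push_cast at this
    linarith
  congr 1
  unfold v
  push_cast [e2]
  rw [show (2*(((m:ℝ) - (k:ℝ) - 1) + 1) - 1) * th m
        = (2*(m:ℝ)+1) * th m - 2*((k:ℝ)+1) * th m by ring,
      show (2*(m:ℝ)+1) * th m = Real.pi by unfold th; field_simp,
      Real.sin_pi_sub]

end BidiagAux

/-- The operator norm of a complex matrix acting on `ℓ²`. -/
noncomputable def opNorm {ι : Type*} [Fintype ι] [DecidableEq ι] (A : Matrix ι ι ℂ) : ℝ :=
  ‖Matrix.toEuclideanCLM (𝕜 := ℂ) (n := ι) A‖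

open BidiagAux Finset in
/-- The bidiagonal matrix with ones on the diagonal and superdiagonal has operator
norm `2 cos (π/(2m+1))`. -/
theorem opNorm_bidiagonal (m : ℕ) (hm : 1 ≤ m)
    (T : Matrix (Fin m) (Fin m) ℂ)
    (hT : ∀ i j : Fin m, T i j =
      if i = j then 1
      else if (i : ℕ) + 1 = (j : ℕ) then 1
      else 0) :
    opNorm T = 2 * Real.cos (Real.pi / (2 * (m : ℝ) + 1)) := by
  have hc : 0 < c m := c_pos m hm
  have hgoal : (2 : ℝ) * Real.cos (Real.pi / (2 * (m : ℝ) + 1)) = c m := rfl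
  rw [hgoal]
  unfold opNorm
  apply le_antisymm
  · -- upper bound
    apply ContinuousLinearMap.opNorm_le_bound _ hc.le
    intro x
    set a : ℕ → ℝ := fun k => if h : k < m then ‖x ⟨k, h⟩‖ else 0 with ha_def
    have ha : ∀ k, 0 ≤ a k := by
      intro k
      by_cases h : k < m <;> simp [ha_def, h]
    have ham : a m = 0 := by simp [ha_def]
    have hax : ∀ i : Fin m, a (i:ℕ) = ‖x i‖ := by
      intro i
      simp [ha_def, i.isLt]
    have hbound : ∀ i : Fin m,
        ‖(Matrix.toEuclideanCLM (𝕜 := ℂ) T) x i‖ ≤ a (i:ℕ) + a ((i:ℕ)+1) := by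
      intro i
      have h0 : (Matrix.toEuclideanCLM (𝕜 := ℂ) T) x i = T.mulVec x i := rfl
      rw [h0, mulVec_formula m T hT x i]
      refine (norm_add_le _ _).trans ?_
      have h2 : ‖(if h : (i:ℕ)+1 < m then x ⟨(i:ℕ)+1, h⟩ else 0)‖ = a ((i:ℕ)+1) := by
        by_cases h : (i:ℕ)+1 < m <;> simp [ha_def, h]
      rw [hax i, h2]
    have hsum : ∑ i : Fin m, ‖((Matrix.toEuclideanCLM (𝕜 := ℂ) T) x) i‖^2
        ≤ c m ^2 * ∑ i : Fin m, ‖x i‖^2 := by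
      calc ∑ i : Fin m, ‖((Matrix.toEuclideanCLM (𝕜 := ℂ) T) x) i‖^2
          ≤ ∑ i : Fin m, (a (i:ℕ) + a ((i:ℕ)+1))^2 := by
            apply Finset.sum_le_sum
            intro i _
            exact pow_le_pow_left₀ (norm_nonneg _) (hbound i) 2
        _ = ∑ k ∈ range m, (a k + a (k+1))^2 :=
            Fin.sum_univ_eq_sum_range (fun k => (a k + a (k+1))^2) m
        _ ≤ c m ^2 * ∑ k ∈ range m, (a k)^2 := key2 m hm a ha ham
        _ = c m ^2 * ∑ i : Fin m, ‖x i‖^2 := by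
            rw [← Fin.sum_univ_eq_sum_range (fun k => (a k)^2) m]
            congr 1
            exact Finset.sum_congr rfl (fun i _ => by rw [hax i])
    rw [EuclideanSpace.norm_eq, EuclideanSpace.norm_eq]
    rw [show c m * Real.sqrt (∑ i : Fin m, ‖x i‖^2)
        = Real.sqrt (c m ^2 * ∑ i : Fin m, ‖x i‖^2) by
      rw [Real.sqrt_mul (sq_nonneg _), Real.sqrt_sq hc.le]]
    exact Real.sqrt_le_sqrt hsum
  · -- lower bound
    set y : EuclideanSpace ℂ (Fin m) := WithLp.toLp 2 (fun i : Fin m => ((v m ((i:ℕ)+1) : ℝ) : ℂ)) with hy_def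
    have hv1 : 0 < v m 1 := v_pos m 1 le_rfl hm
    have hy0 : y ≠ 0 := by
      intro hc0
      have h1 : y ⟨0, hm⟩ = 0 := by rw [hc0]; rfl
      rw [hy_def] at h1
      simp only [PiLp.toLp_apply, Complex.ofReal_eq_zero] at h1
      exact hv1.ne' h1
    have hTy : ∀ i : Fin m, (Matrix.toEuclideanCLM (𝕜 := ℂ) T) y i
        = ((c m * Real.sin (2*((i:ℕ)+1) * th m) : ℝ) : ℂ) := by
      intro i
      have h0 : (Matrix.toEuclideanCLM (𝕜 := ℂ) T) y i = T.mulVec y i := rfl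
      rw [h0, mulVec_formula m T hT y i]
      have hyi : y i = ((v m ((i:ℕ)+1) : ℝ) : ℂ) := rfl
      have hnext : (if h : (i:ℕ)+1 < m then y ⟨(i:ℕ)+1, h⟩ else 0)
          = ((v m ((i:ℕ)+2) : ℝ) : ℂ) := by
        by_cases h : (i:ℕ)+1 < m
        · rw [dif_pos h]
        · rw [dif_neg h]
          have hi : (i:ℕ)+1 = m := by have := i.isLt; omega
          rw [show (i:ℕ)+2 = m+1 by omega, v_top m]
          simp
      rw [hyi, hnext, ← Complex.ofReal_add]
      congr 1
      have := vsum m ((i:ℕ)+1)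
      push_cast at this ⊢
      linarith [this]
    have hny : ‖y‖ = Real.sqrt (∑ k ∈ range m, (v m (k+1))^2) := by
      rw [EuclideanSpace.norm_eq]
      congr 1
      rw [← Fin.sum_univ_eq_sum_range (fun k => (v m (k+1))^2) m]
      apply Finset.sum_congr rfl
      intro i _
      rw [show y i = ((v m ((i:ℕ)+1) : ℝ) : ℂ) from rfl, Complex.norm_real]
      rw [Real.norm_eq_abs, sq_abs]
    have hnTy : ‖(Matrix.toEuclideanCLM (𝕜 := ℂ) T) y‖
        = c m * Real.sqrt (∑ k ∈ range m, (v m (k+1))^2) := by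
      rw [EuclideanSpace.norm_eq]
      have : ∑ i : Fin m, ‖((Matrix.toEuclideanCLM (𝕜 := ℂ) T) y) i‖^2
          = c m ^2 * ∑ k ∈ range m, (v m (k+1))^2 := by
        calc ∑ i : Fin m, ‖((Matrix.toEuclideanCLM (𝕜 := ℂ) T) y) i‖^2
            = ∑ i : Fin m, (c m * Real.sin (2*((i:ℕ)+1) * th m))^2 := by
              apply Finset.sum_congr rfl
              intro i _
              rw [hTy i, Complex.norm_real, Real.norm_eq_abs, sq_abs]
          _ = ∑ k ∈ range m, (c m * Real.sin (2*((k:ℝ)+1) * th m))^2 :=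
              Fin.sum_univ_eq_sum_range (fun k => (c m * Real.sin (2*((k:ℝ)+1) * th m))^2) m
          _ = c m ^2 * ∑ k ∈ range m, (Real.sin (2*((k:ℝ)+1) * th m))^2 := by
              rw [Finset.mul_sum]
              exact Finset.sum_congr rfl (fun k _ => by ring)
          _ = c m ^2 * ∑ k ∈ range m, (v m (k+1))^2 := by rw [reflect m]
      rw [this, Real.sqrt_mul (sq_nonneg _), Real.sqrt_sq hc.le]
    have hle := ContinuousLinearMap.le_opNorm (Matrix.toEuclideanCLM (𝕜 := ℂ) T) y
    rw [hnTy, ← hny] at hle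
    have hypos : 0 < ‖y‖ := norm_pos_iff.mpr hy0
    exact le_of_mul_le_mul_right hle hypos
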